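/- Let B be an instance of (2,2)-E3-SAT and let I(B) be the one-to-one HRC instance constructed from B as described. Then B is satisfiable if and only if I(B) admits a stable matching. -/

import Mathlib

/-- A one-to-one HRC instance: residents are partitioned into single residents and
ordered couples; all hospitals have capacity 1. -/
structure HRC1 (R H : Type) where
  singles : List R
  couples : List (R × R)
  singlePref : R → List H
  couplePref : R × R → List (H × H)
  hospPref : H → List R

namespace HRC1

/-- `x` precedes `y` on the strict preference list `l`. -/
def Prefers {α : Type} [DecidableEq α] (l : List α) (x y : α) : Prop :=
  x ∈ l ∧ y ∈ l ∧ l.idxOf x < l.idxOf y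

variable {R H : Type} [DecidableEq R] [DecidableEq H]

/-- `M` is a matching of the instance `I`. -/
def IsMatching (I : HRC1 R H) (M : R → Option H) : Prop :=
  (∀ r₁ r₂ h, M r₁ = some h → M r₂ = some h → r₁ = r₂) ∧
  (∀ r ∈ I.singles, ∀ h, M r = some h → h ∈ I.singlePref r) ∧
  (∀ c ∈ I.couples,
    (M c.1 = none ∧ M c.2 = none) ∨
    ∃ hp ∈ I.couplePref c, M c.1 = some hp.1 ∧ M c.2 = some hp.2) ∧
  (∀ r, (M r).isSome → r ∈ I.singles ∨ ∃ c ∈ I.couples, r = c.1 ∨ r = c.2)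

/-- Hospital `h` is unmatched in `M`. -/
def HospFree (M : R → Option H) (h : H) : Prop := ∀ r, M r ≠ some h

/-- Hospital `h` is unmatched in `M`, or prefers `r` to its current assignee. -/
def HospOpenFor (I : HRC1 R H) (M : R → Option H) (h : H) (r : R) : Prop :=
  HospFree M h ∨ ∃ r', M r' = some h ∧ Prefers (I.hospPref h) r r'

/-- Blocking pair consisting of a single resident `r` and a hospital `h`. -/
def BlockSingle (I : HRC1 R H) (M : R → Option H) (r : R) (h : H) : Prop :=
  r ∈ I.singles ∧ h ∈ I.singlePref r ∧
  (M r = none ∨ ∃ h', M r = some h' ∧ Prefers (I.singlePref r) h h') ∧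
  I.HospOpenFor M h r

/-- Blocking pair consisting of a couple `c` and a pair of hospitals `hp` on its joint list. -/
def BlockCouple (I : HRC1 R H) (M : R → Option H) (c : R × R) (hp : H × H) : Prop :=
  c ∈ I.couples ∧ hp ∈ I.couplePref c ∧
  ((M c.1 = none ∧ M c.2 = none) ∨
    ∃ hp' ∈ I.couplePref c, M c.1 = some hp'.1 ∧ M c.2 = some hp'.2 ∧
      Prefers (I.couplePref c) hp hp') ∧
  (M c.1 = some hp.1 ∨ I.HospOpenFor M hp.1 c.1) ∧
  (M c.2 = some hp.2 ∨ I.HospOpenFor M hp.2 c.2)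

/-- `M` is a stable matching of the instance `I`. -/
def Stable (I : HRC1 R H) (M : R → Option H) : Prop :=
  I.IsMatching M ∧ (∀ r h, ¬ I.BlockSingle M r h) ∧ (∀ c hp, ¬ I.BlockCouple M c hp)

end HRC1

/-- An instance of (2,2)-E3-SAT: `m` clauses, each with exactly 3 literals over `n`
variables (a literal is a variable together with a polarity, `true` for positive);
`occ l` enumerates the two occurrences of the literal `l`, so that each of the literals
`vᵢ` and `¬vᵢ` appears exactly twice. -/
structure E3SAT (n m : ℕ) where
  clause : Fin m → Fin 3 → Fin n × Bool
  occ : Fin n × Bool → Fin 2 → Fin m × Fin 3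
  occ_spec : ∀ l r, clause (occ l r).1 (occ l r).2 = l
  occ_inj : ∀ l, occ l 0 ≠ occ l 1
  occ_surj : ∀ j s, ∃ r, occ (clause j s) r = (j, s)

namespace E3SAT

variable {n m : ℕ}

/-- `B` is satisfiable. -/
def Satisfiable (B : E3SAT n m) : Prop :=
  ∃ f : Fin n → Bool, ∀ j : Fin m, ∃ s : Fin 3, f (B.clause j s).1 = (B.clause j s).2

/-- The index (`0` or `1`) of the occurrence of its literal that position `s` of
clause `j` constitutes. -/
def rIdx (B : E3SAT n m) (j : Fin m) (s : Fin 3) : Fin 2 :=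
  if B.occ (B.clause j s) 0 = (j, s) then 0 else 1

end E3SAT

/-- Residents of the instance `I(B)`: `a i r = a_i^{r+1}`, `b i r = b_i^{r+1}`,
`x j s = x_j^{s+1}`, `y j s = y_j^{s+1}` (indices are 0-based). -/
inductive Res (n m : ℕ)
  | a (i : Fin n) (r : Fin 2)
  | b (i : Fin n) (r : Fin 2)
  | x (j : Fin m) (s : Fin 3)
  | y (j : Fin m) (s : Fin 3)
deriving DecidableEq

/-- Hospitals of the instance `I(B)`: `h i k = h_i^{k+1}`, `t j k = t_j^{k+1}`
(indices are 0-based). -/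
inductive Hos (n m : ℕ)
  | h (i : Fin n) (k : Fin 6)
  | t (j : Fin m) (k : Fin 6)
deriving DecidableEq

variable {n m : ℕ}

/-- The hospital `h(x_j^s)`: if the `r`-th occurrence of literal `vᵢ` is at position `s`
of clause `c_j` then `h(x_j^s) = h_i^{2r+1}`; if the `r`-th occurrence of `¬vᵢ` is at
position `s` of `c_j` then `h(x_j^s) = h_i^{2r+2}` (with `r ∈ {1,2}`, 1-based). -/
def hX (B : E3SAT n m) (j : Fin m) (s : Fin 3) : Hos n m :=
  let l := B.clause j s
  let v := (B.rIdx j s).val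
  have hv : v < 2 := (B.rIdx j s).isLt
  Hos.h l.1 (if l.2 then ⟨2 * v + 2, by omega⟩ else ⟨2 * v + 3, by omega⟩)

/-- The resident `x(h_i^{k+1})` for `k ∈ {2,3,4,5}` (0-based), i.e. the
resident `x_j^s` corresponding to a variable hospital for variable `i`. -/
def xOfH (B : E3SAT n m) (i : Fin n) (k : Fin 6) : Res n m :=
  let o := B.occ (i, decide (k.val % 2 = 0)) (if k.val < 4 then 0 else 1)
  Res.x o.1 o.2

/-- The one-to-one HRC instance `I(B)` constructed from the (2,2)-E3-SAT instance `B`. -/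
def instI (B : E3SAT n m) : HRC1 (Res n m) (Hos n m) where
  singles := []
  couples :=
    ((List.finRange n).flatMap fun i =>
      (List.finRange 2).map fun r => (Res.a i r, Res.b i r)) ++
    ((List.finRange m).flatMap fun j =>
      (List.finRange 3).map fun s => (Res.x j s, Res.y j s))
  singlePref := fun _ => []
  couplePref := fun c => match c with
    | (Res.a i r, Res.b i' r') =>
        if i' = i ∧ r' = r then
          if r = 0 then [(Hos.h i 0, Hos.h i 2), (Hos.h i 1, Hos.h i 3)]
          else [(Hos.h i 1, Hos.h i 4), (Hos.h i 0, Hos.h i 5)]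
        else []
    | (Res.x j s, Res.y j' s') =>
        if j' = j ∧ s' = s then
          if s = 0 then [(hX B j 0, Hos.t j 3), (Hos.t j 0, Hos.t j 2)]
          else if s = 1 then [(hX B j 1, Hos.t j 4), (Hos.t j 1, Hos.t j 0)]
          else [(hX B j 2, Hos.t j 5), (Hos.t j 2, Hos.t j 1)]
        else []
    | _ => []
  hospPref := fun hh => match hh with
    | Hos.h i k =>
        if k = 0 then [Res.a i 1, Res.a i 0]
        else if k = 1 then [Res.a i 0, Res.a i 1]
        else if k = 2 then [Res.b i 0, xOfH B i 2]
        else if k = 3 then [Res.b i 0, xOfH B i 3]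
        else if k = 4 then [Res.b i 1, xOfH B i 4]
        else [Res.b i 1, xOfH B i 5]
    | Hos.t j k =>
        if k = 0 then [Res.x j 0, Res.y j 1]
        else if k = 1 then [Res.x j 1, Res.y j 2]
        else if k = 2 then [Res.x j 2, Res.y j 0]
        else if k = 3 then [Res.y j 0]
        else if k = 4 then [Res.y j 1]
        else [Res.y j 2]


set_option linter.unreachableTactic false
set_option linter.unusedTactic false
set_option linter.unusedVariables false

section LocalAux

open HRC1

section PrefLemmas
variable {α : Type} [DecidableEq α]

theorem not_prefers_head {x : α} {l : List α} {z : α} : ¬ Prefers (x :: l) z x := by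
  rintro ⟨_, _, hlt⟩
  simp [List.idxOf_cons_self] at hlt

theorem prefers_pair {x y : α} (h : x ≠ y) : Prefers [x, y] x y := by
  refine ⟨by simp, by simp, ?_⟩
  simp [List.idxOf_cons_self, List.idxOf_cons, beq_eq_false_iff_ne.2 h]

theorem prefers_pair_eq {x y z : α} (h : x ≠ y) (hp : Prefers [x, y] z y) : z = x := by
  obtain ⟨hz, _, hlt⟩ := hp
  rcases (by simpa using hz : z = x ∨ z = y) with h1 | h1
  · exact h1
  · exact absurd hlt (by subst h1; exact lt_irrefl _)

theorem not_mem_no_prefers {x y : α} {l : List α} (h : y ∉ l) : ¬ Prefers l x y := by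
  rintro ⟨_, hy, _⟩; exact h hy

end PrefLemmas

end LocalAux

section LocalAux

namespace E3SAT
variable {n m : ℕ}

theorem occ_rIdx (B : E3SAT n m) (j : Fin m) (s : Fin 3) :
    B.occ (B.clause j s) (B.rIdx j s) = (j, s) := by
  unfold rIdx
  split
  · assumption
  · obtain ⟨r, hr⟩ := B.occ_surj j s
    have h2 : r = 0 ∨ r = 1 := by
      rcases r with ⟨v, hv⟩
      interval_cases v
      · exact Or.inl rfl
      · exact Or.inr rfl
    rcases h2 with h | h
    · subst h; exact absurd hr (by assumption)
    · subst h; exact hr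

/-- The Fin-6 index of the hospital `hX B j s`. -/
def hXk (B : E3SAT n m) (j : Fin m) (s : Fin 3) : Fin 6 :=
  if (B.clause j s).2 then ⟨2 * (B.rIdx j s).val + 2, by have := (B.rIdx j s).isLt; omega⟩
  else ⟨2 * (B.rIdx j s).val + 3, by have := (B.rIdx j s).isLt; omega⟩

theorem hX_def (B : E3SAT n m) (j : Fin m) (s : Fin 3) :
    hX B j s = Hos.h (B.clause j s).1 (hXk B j s) := rfl

theorem rIdx_two (B : E3SAT n m) (j : Fin m) (s : Fin 3) :
    B.rIdx j s = 0 ∨ B.rIdx j s = 1 := by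
  rcases h : B.rIdx j s with ⟨v, hv⟩
  interval_cases v
  · exact Or.inl rfl
  · exact Or.inr rfl

theorem hXk_ge_two (B : E3SAT n m) (j : Fin m) (s : Fin 3) : 2 ≤ (hXk B j s).val := by
  unfold hXk; split <;> simp

theorem xOfH_hXk (B : E3SAT n m) (j : Fin m) (s : Fin 3) :
    xOfH B (B.clause j s).1 (hXk B j s) = Res.x j s := by
  have hocc := B.occ_rIdx j s
  rcases B.rIdx_two j s with hr | hr <;> rcases hp : (B.clause j s).2 with _ | _ <;>
    · simp only [xOfH, hXk, hp, hr, if_true, if_false, Bool.false_eq_true]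
      norm_num
      rw [← hp, Prod.mk.eta, ← hr, hocc]
      exact ⟨rfl, rfl⟩

end E3SAT

end LocalAux

section LocalAux
open HRC1 E3SAT
variable {n m : ℕ} (B : E3SAT n m)

theorem hX_inj {j j' : Fin m} {s s' : Fin 3} (h : hX B j s = hX B j' s') :
    j = j' ∧ s = s' := by
  have h1 := xOfH_hXk B j s
  have h2 := xOfH_hXk B j' s'
  rw [hX_def, hX_def] at h
  rw [Hos.h.injEq] at h
  rw [h.1, h.2] at h1
  rw [h1] at h2
  rw [Res.x.injEq] at h2
  exact ⟨h2.1, h2.2⟩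

theorem mem_couples_ab (i : Fin n) (r : Fin 2) :
    (Res.a i r, Res.b i r) ∈ (instI B).couples := by
  simp [instI]

theorem mem_couples_xy (j : Fin m) (s : Fin 3) :
    (Res.x j s, Res.y j s) ∈ (instI B).couples := by
  simp [instI]

theorem couples_elim {c : Res n m × Res n m} (hc : c ∈ (instI B).couples) :
    (∃ i r, c = (Res.a i r, Res.b i r)) ∨ ∃ j s, c = (Res.x j s, Res.y j s) := by
  simp [instI] at hc
  rcases hc with ⟨i, h | h⟩ | ⟨j, s, h⟩
  · exact Or.inl ⟨i, 0, h.symm⟩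
  · exact Or.inl ⟨i, 1, h.symm⟩
  · exact Or.inr ⟨j, s, h.symm⟩

theorem cpref_a (i : Fin n) :
    (instI B).couplePref (Res.a i 0, Res.b i 0) = [(Hos.h i 0, Hos.h i 2), (Hos.h i 1, Hos.h i 3)] ∧
    (instI B).couplePref (Res.a i 1, Res.b i 1) = [(Hos.h i 1, Hos.h i 4), (Hos.h i 0, Hos.h i 5)] := by
  constructor <;> simp [instI]

theorem cpref_x (j : Fin m) :
    (instI B).couplePref (Res.x j 0, Res.y j 0) = [(hX B j 0, Hos.t j 3), (Hos.t j 0, Hos.t j 2)] ∧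
    (instI B).couplePref (Res.x j 1, Res.y j 1) = [(hX B j 1, Hos.t j 4), (Hos.t j 1, Hos.t j 0)] ∧
    (instI B).couplePref (Res.x j 2, Res.y j 2) = [(hX B j 2, Hos.t j 5), (Hos.t j 2, Hos.t j 1)] := by
  refine ⟨?_, ?_, ?_⟩ <;> simp [instI]

theorem hpref_h (i : Fin n) :
    (instI B).hospPref (Hos.h i 0) = [Res.a i 1, Res.a i 0] ∧
    (instI B).hospPref (Hos.h i 1) = [Res.a i 0, Res.a i 1] ∧
    (instI B).hospPref (Hos.h i 2) = [Res.b i 0, xOfH B i 2] ∧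
    (instI B).hospPref (Hos.h i 3) = [Res.b i 0, xOfH B i 3] ∧
    (instI B).hospPref (Hos.h i 4) = [Res.b i 1, xOfH B i 4] ∧
    (instI B).hospPref (Hos.h i 5) = [Res.b i 1, xOfH B i 5] := by
  refine ⟨?_, ?_, ?_, ?_, ?_, ?_⟩ <;> simp [instI]

theorem hpref_t (j : Fin m) :
    (instI B).hospPref (Hos.t j 0) = [Res.x j 0, Res.y j 1] ∧
    (instI B).hospPref (Hos.t j 1) = [Res.x j 1, Res.y j 2] ∧
    (instI B).hospPref (Hos.t j 2) = [Res.x j 2, Res.y j 0] ∧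
    (instI B).hospPref (Hos.t j 3) = [Res.y j 0] ∧
    (instI B).hospPref (Hos.t j 4) = [Res.y j 1] ∧
    (instI B).hospPref (Hos.t j 5) = [Res.y j 2] := by
  refine ⟨?_, ?_, ?_, ?_, ?_, ?_⟩ <;> simp [instI]

end LocalAux

section LocalAux
open HRC1 E3SAT
variable {n m : ℕ}

/-- Literal at position `s` of clause `j` is true under `f`. -/
def litb (B : E3SAT n m) (f : Fin n → Bool) (j : Fin m) (s : Fin 3) : Bool :=
  f (B.clause j s).1 == (B.clause j s).2

def prev3 (s : Fin 3) : Fin 3 := ⟨(s.val + 2) % 3, by omega⟩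
def nxt3 (s : Fin 3) : Fin 3 := ⟨(s.val + 1) % 3, by omega⟩
def tlo (s : Fin 3) : Fin 6 := ⟨s.val, by omega⟩
def thi (s : Fin 3) : Fin 6 := ⟨s.val + 3, by omega⟩

theorem fin3_cases (s : Fin 3) : s = 0 ∨ s = 1 ∨ s = 2 := by omega

theorem prev3_nxt3 (s : Fin 3) : prev3 (nxt3 s) = s := by
  rcases fin3_cases s with h | h | h <;> subst h <;> decide

theorem nxt3_prev3 (s : Fin 3) : nxt3 (prev3 s) = s := by
  rcases fin3_cases s with h | h | h <;> subst h <;> decide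

theorem hpref_hX (B : E3SAT n m) (j : Fin m) (s : Fin 3) :
    (instI B).hospPref (hX B j s) =
      [Res.b (B.clause j s).1 (B.rIdx j s), Res.x j s] := by
  have hx := xOfH_hXk B j s
  rw [hX_def]
  rcases B.rIdx_two j s with hr | hr <;> rcases hp : (B.clause j s).2 with _ | _
  · have hk : hXk B j s = (3 : Fin 6) := by simp [hXk, hp, hr, Fin.ext_iff]
    rw [hk] at hx ⊢
    rw [(hpref_h B _).2.2.2.1, hx, hr]
  · have hk : hXk B j s = (2 : Fin 6) := by simp [hXk, hp, hr, Fin.ext_iff]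
    rw [hk] at hx ⊢
    rw [(hpref_h B _).2.2.1, hx, hr]
  · have hk : hXk B j s = (5 : Fin 6) := by simp [hXk, hp, hr, Fin.ext_iff]
    rw [hk] at hx ⊢
    rw [(hpref_h B _).2.2.2.2.2, hx, hr]
  · have hk : hXk B j s = (4 : Fin 6) := by simp [hXk, hp, hr, Fin.ext_iff]
    rw [hk] at hx ⊢
    rw [(hpref_h B _).2.2.2.2.1, hx, hr]

def mkM (B : E3SAT n m) (f : Fin n → Bool) : Res n m → Option (Hos n m)
  | .a i r => some (.h i (if f i = decide (r = 0) then 1 else 0))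
  | .b i r => some (.h i (if r = 0 then (if f i then 3 else 2) else (if f i then 5 else 4)))
  | .x j s => if litb B f j s then some (hX B j s)
      else if litb B f j (prev3 s) then some (.t j (tlo s)) else none
  | .y j s => if litb B f j s then some (.t j (thi s))
      else if litb B f j (prev3 s) then some (.t j (tlo (prev3 s))) else none

end LocalAux

section LocalAux
open HRC1 E3SAT
variable {n m : ℕ}

theorem fin2_cases (r : Fin 2) : r = 0 ∨ r = 1 := by omega

theorem hXk_spec (B : E3SAT n m) (j : Fin m) (s : Fin 3) :
    ((B.clause j s).2 = true ∧ B.rIdx j s = 0 ∧ hXk B j s = 2) ∨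
    ((B.clause j s).2 = true ∧ B.rIdx j s = 1 ∧ hXk B j s = 4) ∨
    ((B.clause j s).2 = false ∧ B.rIdx j s = 0 ∧ hXk B j s = 3) ∨
    ((B.clause j s).2 = false ∧ B.rIdx j s = 1 ∧ hXk B j s = 5) := by
  rcases B.rIdx_two j s with hr | hr <;> rcases hp : (B.clause j s).2 with _ | _ <;>
    simp [hXk, hp, hr, Fin.ext_iff]

theorem mkM_a (B : E3SAT n m) (f : Fin n → Bool) (i : Fin n) (r : Fin 2) :
    mkM B f (Res.a i r) = some (.h i (if f i = decide (r = 0) then 1 else 0)) := rfl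

theorem mkM_b (B : E3SAT n m) (f : Fin n → Bool) (i : Fin n) (r : Fin 2) :
    mkM B f (Res.b i r) =
      some (.h i (if r = 0 then (if f i then 3 else 2) else (if f i then 5 else 4))) := rfl

theorem mkM_x (B : E3SAT n m) (f : Fin n → Bool) (j : Fin m) (s : Fin 3) :
    mkM B f (Res.x j s) = (if litb B f j s then some (hX B j s)
      else if litb B f j (prev3 s) then some (Hos.t j (tlo s)) else none) := rfl

theorem mkM_y (B : E3SAT n m) (f : Fin n → Bool) (j : Fin m) (s : Fin 3) :
    mkM B f (Res.y j s) = (if litb B f j s then some (Hos.t j (thi s))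
      else if litb B f j (prev3 s) then some (Hos.t j (tlo (prev3 s))) else none) := rfl

theorem mkM_x_eq {B : E3SAT n m} {f : Fin n → Bool} {j : Fin m} {s : Fin 3} {hh : Hos n m}
    (h : mkM B f (Res.x j s) = some hh) :
    (litb B f j s = true ∧ hh = hX B j s) ∨
    (litb B f j s = false ∧ litb B f j (prev3 s) = true ∧ hh = Hos.t j (tlo s)) := by
  rw [mkM_x] at h
  split at h
  · exact Or.inl ⟨by assumption, (Option.some.injEq _ _ ▸ h).symm⟩
  · split at h
    · exact Or.inr ⟨by simpa using (by assumption : ¬ litb B f j s = true), by assumption,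
        (Option.some.injEq _ _ ▸ h).symm⟩
    · exact absurd h (by simp)

theorem mkM_y_eq {B : E3SAT n m} {f : Fin n → Bool} {j : Fin m} {s : Fin 3} {hh : Hos n m}
    (h : mkM B f (Res.y j s) = some hh) :
    (litb B f j s = true ∧ hh = Hos.t j (thi s)) ∨
    (litb B f j s = false ∧ litb B f j (prev3 s) = true ∧ hh = Hos.t j (tlo (prev3 s))) := by
  rw [mkM_y] at h
  split at h
  · exact Or.inl ⟨by assumption, (Option.some.injEq _ _ ▸ h).symm⟩
  · split at h
    · exact Or.inr ⟨by simpa using (by assumption : ¬ litb B f j s = true), by assumption,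
        (Option.some.injEq _ _ ▸ h).symm⟩
    · exact absurd h (by simp)

theorem mkM_x_true {B : E3SAT n m} {f : Fin n → Bool} {j : Fin m} {s : Fin 3}
    (h : litb B f j s = true) : mkM B f (Res.x j s) = some (hX B j s) := by
  rw [mkM_x]; rw [if_pos h]

theorem mkM_x_mid {B : E3SAT n m} {f : Fin n → Bool} {j : Fin m} {s : Fin 3}
    (h : litb B f j s = false) (h2 : litb B f j (prev3 s) = true) :
    mkM B f (Res.x j s) = some (Hos.t j (tlo s)) := by
  rw [mkM_x]; rw [if_neg (by simp [h]), if_pos h2]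

theorem mkM_x_none {B : E3SAT n m} {f : Fin n → Bool} {j : Fin m} {s : Fin 3}
    (h : litb B f j s = false) (h2 : litb B f j (prev3 s) = false) :
    mkM B f (Res.x j s) = none := by
  rw [mkM_x]; rw [if_neg (by simp [h]), if_neg (by simp [h2])]

theorem mkM_y_true {B : E3SAT n m} {f : Fin n → Bool} {j : Fin m} {s : Fin 3}
    (h : litb B f j s = true) : mkM B f (Res.y j s) = some (Hos.t j (thi s)) := by
  rw [mkM_y]; rw [if_pos h]

theorem mkM_y_mid {B : E3SAT n m} {f : Fin n → Bool} {j : Fin m} {s : Fin 3}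
    (h : litb B f j s = false) (h2 : litb B f j (prev3 s) = true) :
    mkM B f (Res.y j s) = some (Hos.t j (tlo (prev3 s))) := by
  rw [mkM_y]; rw [if_neg (by simp [h]), if_pos h2]

theorem mkM_y_none {B : E3SAT n m} {f : Fin n → Bool} {j : Fin m} {s : Fin 3}
    (h : litb B f j s = false) (h2 : litb B f j (prev3 s) = false) :
    mkM B f (Res.y j s) = none := by
  rw [mkM_y]; rw [if_neg (by simp [h]), if_neg (by simp [h2])]

theorem b_at_hX {B : E3SAT n m} {f : Fin n → Bool} {j : Fin m} {s : Fin 3}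
    (hl : litb B f j s = false) :
    mkM B f (Res.b (B.clause j s).1 (B.rIdx j s)) = some (hX B j s) := by
  rw [mkM_b, hX_def, Option.some.injEq, Hos.h.injEq]
  refine ⟨rfl, ?_⟩
  unfold litb at hl
  rcases hXk_spec B j s with ⟨hp, hr, hk⟩ | ⟨hp, hr, hk⟩ | ⟨hp, hr, hk⟩ | ⟨hp, hr, hk⟩ <;>
    rw [hp] at hl <;>
    simp only [beq_eq_false_iff_ne, ne_eq, Bool.not_eq_true, Bool.not_eq_false] at hl <;>
    simp [hr, hk, hl]

theorem b_ne_hX {B : E3SAT n m} {f : Fin n → Bool} {j : Fin m} {s : Fin 3}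
    (hl : litb B f j s = true) (i : Fin n) (r : Fin 2) :
    mkM B f (Res.b i r) ≠ some (hX B j s) := by
  rw [mkM_b, hX_def]
  intro h
  rw [Option.some.injEq, Hos.h.injEq] at h
  obtain ⟨rfl, hk⟩ := h
  unfold litb at hl
  rw [beq_iff_eq] at hl
  rcases hXk_spec B j s with ⟨hp, hr, hk'⟩ | ⟨hp, hr, hk'⟩ | ⟨hp, hr, hk'⟩ | ⟨hp, hr, hk'⟩ <;>
    rw [hp] at hl <;> rw [hk'] at hk <;> rcases fin2_cases r with hr2 | hr2 <;>
    simp [hr2, hl] at hk <;> omega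

end LocalAux

section LocalAux
open HRC1 E3SAT
variable {n m : ℕ}

theorem tlo_inj {s s' : Fin 3} (h : tlo s = tlo s') : s = s' := by
  simp [tlo, Fin.ext_iff] at h ⊢; exact h

theorem thi_inj {s s' : Fin 3} (h : thi s = thi s') : s = s' := by
  simp [thi, Fin.ext_iff] at h ⊢; omega

theorem prev3_inj {s s' : Fin 3} (h : prev3 s = prev3 s') : s = s' := by
  rw [← nxt3_prev3 s, ← nxt3_prev3 s', h]

theorem thi_ne_tlo (s s' : Fin 3) : thi s ≠ tlo s' := by
  simp [thi, tlo, Fin.ext_iff]; omega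

theorem tlo_ne_thi (s s' : Fin 3) : tlo s ≠ thi s' := by
  simp [thi, tlo, Fin.ext_iff]; omega

theorem mkM_inj (B : E3SAT n m) (f : Fin n → Bool) :
    ∀ r1 r2 hh, mkM B f r1 = some hh → mkM B f r2 = some hh → r1 = r2 := by
  rintro (⟨i,r⟩|⟨i,r⟩|⟨j,s⟩|⟨j,s⟩) (⟨i',r'⟩|⟨i',r'⟩|⟨j',s'⟩|⟨j',s'⟩) hh h1 h2
  -- a a
  · rw [mkM_a, Option.some.injEq] at h1 h2
    have h3 := h1.trans h2.symm
    rw [Hos.h.injEq] at h3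
    obtain ⟨rfl, hk⟩ := h3
    rcases fin2_cases r with rfl | rfl <;> rcases fin2_cases r' with rfl | rfl <;>
      rcases hf : f i <;> simp_all
  -- a b
  · rw [mkM_a, Option.some.injEq] at h1
    rw [mkM_b, Option.some.injEq] at h2
    have h3 := h1.trans h2.symm
    rw [Hos.h.injEq] at h3
    obtain ⟨rfl, hk⟩ := h3
    rcases fin2_cases r with rfl | rfl <;> rcases fin2_cases r' with rfl | rfl <;>
      rcases hf : f i <;> simp_all
  -- a x
  · rw [mkM_a, Option.some.injEq] at h1
    rcases mkM_x_eq h2 with ⟨hl, rfl⟩ | ⟨hl, hl2, rfl⟩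
    · rw [hX_def, Hos.h.injEq] at h1
      have := hXk_ge_two B j' s'
      obtain ⟨rfl, hk⟩ := h1
      have := congrArg Fin.val hk
      split at this <;> simp at this <;> omega
    · exact absurd h1 (by simp)
  -- a y
  · rw [mkM_a, Option.some.injEq] at h1
    rcases mkM_y_eq h2 with ⟨hl, rfl⟩ | ⟨hl, hl2, rfl⟩ <;> exact absurd h1 (by simp)
  -- b a
  · rw [mkM_b, Option.some.injEq] at h1
    rw [mkM_a, Option.some.injEq] at h2
    have h3 := h1.trans h2.symm
    rw [Hos.h.injEq] at h3
    obtain ⟨rfl, hk⟩ := h3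
    rcases fin2_cases r with rfl | rfl <;> rcases fin2_cases r' with rfl | rfl <;>
      rcases hf : f i <;> simp_all
  -- b b
  · rw [mkM_b, Option.some.injEq] at h1 h2
    have h3 := h1.trans h2.symm
    rw [Hos.h.injEq] at h3
    obtain ⟨rfl, hk⟩ := h3
    rcases fin2_cases r with rfl | rfl <;> rcases fin2_cases r' with rfl | rfl <;>
      rcases hf : f i <;> simp_all
  -- b x
  · rcases mkM_x_eq h2 with ⟨hl, rfl⟩ | ⟨hl, hl2, rfl⟩
    · exact absurd h1 (b_ne_hX hl i r)
    · rw [mkM_b] at h1; exact absurd h1 (by simp)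
  -- b y
  · rw [mkM_b, Option.some.injEq] at h1
    rcases mkM_y_eq h2 with ⟨hl, rfl⟩ | ⟨hl, hl2, rfl⟩ <;> exact absurd h1 (by simp)
  -- x a
  · rw [mkM_a, Option.some.injEq] at h2
    rcases mkM_x_eq h1 with ⟨hl, rfl⟩ | ⟨hl, hl2, rfl⟩
    · rw [hX_def, Hos.h.injEq] at h2
      have := hXk_ge_two B j s
      obtain ⟨rfl, hk⟩ := h2
      have := congrArg Fin.val hk
      split at this <;> simp at this <;> omega
    · exact absurd h2 (by simp)
  -- x b
  · rcases mkM_x_eq h1 with ⟨hl, rfl⟩ | ⟨hl, hl2, rfl⟩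
    · exact absurd h2 (b_ne_hX hl i' r')
    · rw [mkM_b] at h2; exact absurd h2 (by simp)
  -- x x
  · rcases mkM_x_eq h1 with ⟨hl, rfl⟩ | ⟨hl, hl2, rfl⟩ <;>
      rcases mkM_x_eq h2 with ⟨hl', he⟩ | ⟨hl', hl2', he⟩
    · obtain ⟨rfl, rfl⟩ := hX_inj B he.symm; rfl
    · rw [hX_def] at he; exact absurd he (by simp)
    · rw [hX_def] at he; exact absurd he.symm (by simp)
    · rw [Hos.t.injEq] at he
      obtain ⟨rfl, hk⟩ := he
      rw [tlo_inj hk.symm]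
  -- x y
  · rcases mkM_x_eq h1 with ⟨hl, rfl⟩ | ⟨hl, hl2, rfl⟩ <;>
      rcases mkM_y_eq h2 with ⟨hl', he⟩ | ⟨hl', hl2', he⟩
    · rw [hX_def] at he; exact absurd he (by simp)
    · rw [hX_def] at he; exact absurd he (by simp)
    · exact absurd he (by simp [thi_ne_tlo, tlo_ne_thi])
    · rw [Hos.t.injEq] at he
      obtain ⟨rfl, hk⟩ := he
      have hss : prev3 s' = s := tlo_inj hk.symm
      rw [hss] at hl2'
      rw [hl2'] at hl; exact absurd hl (by simp)
  -- y a
  · rw [mkM_a, Option.some.injEq] at h2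
    rcases mkM_y_eq h1 with ⟨hl, rfl⟩ | ⟨hl, hl2, rfl⟩ <;> exact absurd h2 (by simp)
  -- y b
  · rw [mkM_b, Option.some.injEq] at h2
    rcases mkM_y_eq h1 with ⟨hl, rfl⟩ | ⟨hl, hl2, rfl⟩ <;> exact absurd h2 (by simp)
  -- y x
  · rcases mkM_y_eq h1 with ⟨hl, rfl⟩ | ⟨hl, hl2, rfl⟩ <;>
      rcases mkM_x_eq h2 with ⟨hl', he⟩ | ⟨hl', hl2', he⟩
    · rw [hX_def] at he; exact absurd he (by simp)
    · exact absurd he (by simp [thi_ne_tlo, tlo_ne_thi])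
    · rw [hX_def] at he; exact absurd he (by simp)
    · rw [Hos.t.injEq] at he
      obtain ⟨rfl, hk⟩ := he
      have hss : s' = prev3 s := tlo_inj hk.symm
      rw [← hss] at hl2
      rw [hl2] at hl'; exact absurd hl' (by simp)
  -- y y
  · rcases mkM_y_eq h1 with ⟨hl, rfl⟩ | ⟨hl, hl2, rfl⟩ <;>
      rcases mkM_y_eq h2 with ⟨hl', he⟩ | ⟨hl', hl2', he⟩
    · rw [Hos.t.injEq] at he
      obtain ⟨rfl, hk⟩ := he
      rw [thi_inj hk.symm]
    · exact absurd he.symm (by simp [thi_ne_tlo, tlo_ne_thi])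
    · exact absurd he (by simp [thi_ne_tlo, tlo_ne_thi])
    · rw [Hos.t.injEq] at he
      obtain ⟨rfl, hk⟩ := he
      rw [prev3_inj (tlo_inj hk.symm)]

end LocalAux

section LocalAux
open HRC1 E3SAT
variable {n m : ℕ}

theorem prev3_0 : prev3 0 = 2 := rfl
theorem prev3_1 : prev3 1 = 0 := rfl
theorem prev3_2 : prev3 2 = 1 := rfl
theorem tlo_0 : tlo 0 = 0 := rfl
theorem tlo_1 : tlo 1 = 1 := rfl
theorem tlo_2 : tlo 2 = 2 := rfl
theorem thi_0 : thi 0 = 3 := rfl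
theorem thi_1 : thi 1 = 4 := rfl
theorem thi_2 : thi 2 = 5 := rfl

theorem litb_third {B : E3SAT n m} {f : Fin n → Bool} {j : Fin m} {s : Fin 3}
    (hs : ∃ s', litb B f j s' = true)
    (h1 : litb B f j s = false) (h2 : litb B f j (prev3 s) = false) :
    litb B f j (prev3 (prev3 s)) = true := by
  obtain ⟨s', hs'⟩ := hs
  rcases fin3_cases s with rfl | rfl | rfl <;> rcases fin3_cases s' with rfl | rfl | rfl <;>
    simp_all [prev3_0, prev3_1, prev3_2]

theorem mkM_isMatching (B : E3SAT n m) (f : Fin n → Bool) :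
    (instI B).IsMatching (mkM B f) := by
  refine ⟨mkM_inj B f, by simp [instI], ?_, ?_⟩
  · intro c hc
    rcases couples_elim B hc with ⟨i, r, rfl⟩ | ⟨j, s, rfl⟩
    · right
      rcases fin2_cases r with rfl | rfl <;> rcases hf : f i with _ | _
      · exact ⟨(Hos.h i 0, Hos.h i 2), by simp [(cpref_a B i).1],
          by simp [mkM_a, hf], by simp [mkM_b, hf]⟩
      · exact ⟨(Hos.h i 1, Hos.h i 3), by simp [(cpref_a B i).1],
          by simp [mkM_a, hf], by simp [mkM_b, hf]⟩
      · exact ⟨(Hos.h i 1, Hos.h i 4), by simp [(cpref_a B i).2],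
          by simp [mkM_a, hf], by simp [mkM_b, hf]⟩
      · exact ⟨(Hos.h i 0, Hos.h i 5), by simp [(cpref_a B i).2],
          by simp [mkM_a, hf], by simp [mkM_b, hf]⟩
    · rcases hx : litb B f j s with _ | _
      · rcases hx2 : litb B f j (prev3 s) with _ | _
        · exact Or.inl ⟨mkM_x_none hx hx2, mkM_y_none hx hx2⟩
        · refine Or.inr ⟨(Hos.t j (tlo s), Hos.t j (tlo (prev3 s))), ?_,
            mkM_x_mid hx hx2, mkM_y_mid hx hx2⟩
          rcases fin3_cases s with rfl | rfl | rfl <;>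
            simp [(cpref_x B j).1, (cpref_x B j).2.1, (cpref_x B j).2.2,
              prev3_0, prev3_1, prev3_2, tlo_0, tlo_1, tlo_2]
      · refine Or.inr ⟨(hX B j s, Hos.t j (thi s)), ?_, mkM_x_true hx, mkM_y_true hx⟩
        rcases fin3_cases s with rfl | rfl | rfl <;>
          simp [(cpref_x B j).1, (cpref_x B j).2.1, (cpref_x B j).2.2, thi_0, thi_1, thi_2]
  · intro r _
    rcases r with ⟨i, r⟩ | ⟨i, r⟩ | ⟨j, s⟩ | ⟨j, s⟩
    · exact Or.inr ⟨(Res.a i r, Res.b i r), mem_couples_ab B i r, Or.inl rfl⟩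
    · exact Or.inr ⟨(Res.a i r, Res.b i r), mem_couples_ab B i r, Or.inr rfl⟩
    · exact Or.inr ⟨(Res.x j s, Res.y j s), mem_couples_xy B j s, Or.inl rfl⟩
    · exact Or.inr ⟨(Res.x j s, Res.y j s), mem_couples_xy B j s, Or.inr rfl⟩

end LocalAux

section LocalAux
open HRC1 E3SAT
variable {n m : ℕ}

theorem nxt3_0 : nxt3 0 = 1 := rfl
theorem nxt3_1 : nxt3 1 = 2 := rfl
theorem nxt3_2 : nxt3 2 = 0 := rfl

theorem cpref_x_gen (B : E3SAT n m) (j : Fin m) (s : Fin 3) :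
    (instI B).couplePref (Res.x j s, Res.y j s) =
      [(hX B j s, Hos.t j (thi s)), (Hos.t j (tlo s), Hos.t j (tlo (prev3 s)))] := by
  rcases fin3_cases s with rfl | rfl | rfl <;>
    simp [(cpref_x B j).1, (cpref_x B j).2.1, (cpref_x B j).2.2,
      thi_0, thi_1, thi_2, tlo_0, tlo_1, tlo_2, prev3_0, prev3_1, prev3_2]

theorem hpref_tlo (B : E3SAT n m) (j : Fin m) (s : Fin 3) :
    (instI B).hospPref (Hos.t j (tlo s)) = [Res.x j s, Res.y j (nxt3 s)] := by
  rcases fin3_cases s with rfl | rfl | rfl <;>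
    simp [hpref_t B j, tlo_0, tlo_1, tlo_2, nxt3_0, nxt3_1, nxt3_2]

theorem hpref_thi (B : E3SAT n m) (j : Fin m) (s : Fin 3) :
    (instI B).hospPref (Hos.t j (thi s)) = [Res.y j s] := by
  rcases fin3_cases s with rfl | rfl | rfl <;>
    simp [hpref_t B j, thi_0, thi_1, thi_2]

theorem mkM_stable (B : E3SAT n m) (f : Fin n → Bool)
    (hsat : ∀ j, ∃ s, litb B f j s = true) : (instI B).Stable (mkM B f) := by
  refine ⟨mkM_isMatching B f, fun r h hb => absurd hb.1 (by simp [instI]), ?_⟩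
  rintro c hp ⟨hc, hhp, hch, hb1, hb2⟩
  rcases couples_elim B hc with ⟨i, r, rfl⟩ | ⟨j, s, rfl⟩
  · -- variable couples
    rcases hch with ⟨hn, _⟩ | ⟨hp', hmem', hm1, hm2, hpref⟩
    · rw [mkM_a] at hn; exact absurd hn (by simp)
    rcases fin2_cases r with rfl | rfl
    · rw [(cpref_a B i).1] at hmem' hpref
      rcases hf : f i with _ | _
      · have hp'1 : hp' = (Hos.h i 0, Hos.h i 2) := by
          rcases (by simpa using hmem' : hp' = (Hos.h i 0, Hos.h i 2) ∨
              hp' = (Hos.h i 1, Hos.h i 3)) with h | h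
          · exact h
          · rw [h] at hm1; simp [mkM_a, hf] at hm1
        rw [hp'1] at hpref; exact not_prefers_head hpref
      · have hp'1 : hp' = (Hos.h i 1, Hos.h i 3) := by
          rcases (by simpa using hmem' : hp' = (Hos.h i 0, Hos.h i 2) ∨
              hp' = (Hos.h i 1, Hos.h i 3)) with h | h
          · rw [h] at hm1; simp [mkM_a, hf] at hm1
          · exact h
        rw [hp'1] at hpref
        have hpe : hp = (Hos.h i 0, Hos.h i 2) := prefers_pair_eq (by simp) hpref
        rw [hpe] at hb1
        rcases hb1 with hb1 | hb1
        · simp [mkM_a, hf] at hb1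
        rcases hb1 with hfree | ⟨r', hr', hprefr⟩
        · exact hfree (Res.a i 1) (by simp [mkM_a, hf])
        · rw [(hpref_h B i).1] at hprefr
          rcases (by simpa using hprefr.2.1 : r' = Res.a i 1 ∨ r' = Res.a i 0) with rfl | rfl
          · exact not_prefers_head hprefr
          · simp [mkM_a, hf] at hr'
    · rw [(cpref_a B i).2] at hmem' hpref
      rcases hf : f i with _ | _
      · have hp'1 : hp' = (Hos.h i 1, Hos.h i 4) := by
          rcases (by simpa using hmem' : hp' = (Hos.h i 1, Hos.h i 4) ∨
              hp' = (Hos.h i 0, Hos.h i 5)) with h | h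
          · exact h
          · rw [h] at hm1; simp [mkM_a, hf] at hm1
        rw [hp'1] at hpref; exact not_prefers_head hpref
      · have hp'1 : hp' = (Hos.h i 0, Hos.h i 5) := by
          rcases (by simpa using hmem' : hp' = (Hos.h i 1, Hos.h i 4) ∨
              hp' = (Hos.h i 0, Hos.h i 5)) with h | h
          · rw [h] at hm1; simp [mkM_a, hf] at hm1
          · exact h
        rw [hp'1] at hpref
        have hpe : hp = (Hos.h i 1, Hos.h i 4) := prefers_pair_eq (by simp) hpref
        rw [hpe] at hb1
        rcases hb1 with hb1 | hb1
        · simp [mkM_a, hf] at hb1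
        rcases hb1 with hfree | ⟨r', hr', hprefr⟩
        · exact hfree (Res.a i 0) (by simp [mkM_a, hf])
        · rw [(hpref_h B i).2.1] at hprefr
          rcases (by simpa using hprefr.2.1 : r' = Res.a i 0 ∨ r' = Res.a i 1) with rfl | rfl
          · exact not_prefers_head hprefr
          · simp [mkM_a, hf] at hr'
  · -- clause couples
    rw [cpref_x_gen B j s] at hhp hch
    rcases hx : litb B f j s with _ | _
    · rcases hx2 : litb B f j (prev3 s) with _ | _
      · -- unmatched couple
        have hxn := mkM_x_none (B := B) hx hx2
        have hyn := mkM_y_none (B := B) hx hx2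
        rcases hch with _ | ⟨hp', hmem', hm1, hm2, hpref⟩
        swap
        · rw [hxn] at hm1; exact absurd hm1 (by simp)
        rcases (by simpa using hhp : hp = (hX B j s, Hos.t j (thi s)) ∨
            hp = (Hos.t j (tlo s), Hos.t j (tlo (prev3 s)))) with rfl | rfl
        · -- first pair : hX occupied by b
          rcases hb1 with hb1 | hb1
          · rw [hxn] at hb1; exact absurd hb1 (by simp)
          rcases hb1 with hfree | ⟨r', hr', hprefr⟩
          · exact hfree _ (b_at_hX hx)
          · rw [hpref_hX B j s] at hprefr
            rcases (by simpa using hprefr.2.1 :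
                r' = Res.b (B.clause j s).1 (B.rIdx j s) ∨ r' = Res.x j s) with rfl | rfl
            · exact not_prefers_head hprefr
            · rw [hxn] at hr'; exact absurd hr' (by simp)
        · -- second pair : t (tlo (prev3 s)) occupied by x (prev3 s)
          have h3 := litb_third (hsat j) hx hx2
          have hxm := mkM_x_mid (B := B) hx2 h3
          rcases hb2 with hb2 | hb2
          · rw [hyn] at hb2; exact absurd hb2 (by simp)
          rcases hb2 with hfree | ⟨r', hr', hprefr⟩
          · exact hfree _ hxm
          · rw [hpref_tlo B j (prev3 s), nxt3_prev3] at hprefr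
            rcases (by simpa using hprefr.2.1 :
                r' = Res.x j (prev3 s) ∨ r' = Res.y j s) with rfl | rfl
            · exact not_prefers_head hprefr
            · rw [hyn] at hr'; exact absurd hr' (by simp)
      · -- matched at second pair
        have hxm := mkM_x_mid (B := B) hx hx2
        rcases hch with ⟨hn, _⟩ | ⟨hp', hmem', hm1, hm2, hpref⟩
        · rw [hxm] at hn; exact absurd hn (by simp)
        have hp'1 : hp' = (Hos.t j (tlo s), Hos.t j (tlo (prev3 s))) := by
          rcases (by simpa using hmem' : hp' = (hX B j s, Hos.t j (thi s)) ∨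
              hp' = (Hos.t j (tlo s), Hos.t j (tlo (prev3 s)))) with h | h
          · rw [h] at hm1; rw [hxm] at hm1
            rw [hX_def] at hm1; exact absurd hm1 (by simp)
          · exact h
        rw [hp'1] at hpref
        have hpe : hp = (hX B j s, Hos.t j (thi s)) :=
          prefers_pair_eq (by rw [hX_def]; simp) hpref
        rw [hpe] at hb1
        rcases hb1 with hb1 | hb1
        · rw [hxm] at hb1; rw [hX_def] at hb1; exact absurd hb1.symm (by simp)
        rcases hb1 with hfree | ⟨r', hr', hprefr⟩
        · exact hfree _ (b_at_hX hx)
        · rw [hpref_hX B j s] at hprefr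
          rcases (by simpa using hprefr.2.1 :
              r' = Res.b (B.clause j s).1 (B.rIdx j s) ∨ r' = Res.x j s) with rfl | rfl
          · exact not_prefers_head hprefr
          · rw [hxm] at hr'; rw [hX_def] at hr'; exact absurd hr' (by simp)
    · -- matched at first pair
      have hxt := mkM_x_true (B := B) hx
      rcases hch with ⟨hn, _⟩ | ⟨hp', hmem', hm1, hm2, hpref⟩
      · rw [hxt] at hn; exact absurd hn (by simp)
      have hp'1 : hp' = (hX B j s, Hos.t j (thi s)) := by
        rcases (by simpa using hmem' : hp' = (hX B j s, Hos.t j (thi s)) ∨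
            hp' = (Hos.t j (tlo s), Hos.t j (tlo (prev3 s)))) with h | h
        · exact h
        · rw [h] at hm1; rw [hxt, hX_def] at hm1; exact absurd hm1 (by simp)
      rw [hp'1] at hpref
      exact not_prefers_head hpref

end LocalAux

section LocalAux
open HRC1 E3SAT
variable {n m : ℕ} {B : E3SAT n m} {M : Res n m → Option (Hos n m)}

theorem prev3_prev3 (s : Fin 3) : prev3 (prev3 s) = nxt3 s := by
  rcases fin3_cases s with rfl | rfl | rfl <;> decide

theorem matched_shape (hM : (instI B).IsMatching M) {r0 : Res n m} {hh : Hos n m}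
    (h : M r0 = some hh) :
    (∃ i, (r0 = Res.a i 0 ∨ r0 = Res.a i 1) ∧ (hh = Hos.h i 0 ∨ hh = Hos.h i 1)) ∨
    (∃ i, (r0 = Res.b i 0 ∧ (hh = Hos.h i 2 ∨ hh = Hos.h i 3)) ∨
          (r0 = Res.b i 1 ∧ (hh = Hos.h i 4 ∨ hh = Hos.h i 5))) ∨
    (∃ j s, r0 = Res.x j s ∧ (hh = hX B j s ∨ hh = Hos.t j (tlo s))) ∨
    (∃ j s, r0 = Res.y j s ∧ (hh = Hos.t j (thi s) ∨ hh = Hos.t j (tlo (prev3 s)))) := by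
  obtain ⟨hinj, _, hcpl, hall⟩ := hM
  rcases hall r0 (by rw [h]; rfl) with h1 | ⟨c, hc, hc1⟩
  · simp [instI] at h1
  rcases hcpl c hc with ⟨hn1, hn2⟩ | ⟨hp', hmem', hm1, hm2⟩
  · rcases hc1 with rfl | rfl
    · rw [hn1] at h; exact absurd h (by simp)
    · rw [hn2] at h; exact absurd h (by simp)
  rcases couples_elim B hc with ⟨i, r, rfl⟩ | ⟨j, s, rfl⟩
  · rcases fin2_cases r with rfl | rfl
    · rw [(cpref_a B i).1] at hmem'
      rcases (by simpa using hmem' : hp' = (Hos.h i 0, Hos.h i 2) ∨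
          hp' = (Hos.h i 1, Hos.h i 3)) with rfl | rfl <;> rcases hc1 with rfl | rfl
      · exact Or.inl ⟨i, Or.inl rfl, Or.inl (by rw [hm1] at h; simpa using h.symm)⟩
      · exact Or.inr (Or.inl ⟨i, Or.inl ⟨rfl, Or.inl (by rw [hm2] at h; simpa using h.symm)⟩⟩)
      · exact Or.inl ⟨i, Or.inl rfl, Or.inr (by rw [hm1] at h; simpa using h.symm)⟩
      · exact Or.inr (Or.inl ⟨i, Or.inl ⟨rfl, Or.inr (by rw [hm2] at h; simpa using h.symm)⟩⟩)
    · rw [(cpref_a B i).2] at hmem'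
      rcases (by simpa using hmem' : hp' = (Hos.h i 1, Hos.h i 4) ∨
          hp' = (Hos.h i 0, Hos.h i 5)) with rfl | rfl <;> rcases hc1 with rfl | rfl
      · exact Or.inl ⟨i, Or.inr rfl, Or.inr (by rw [hm1] at h; simpa using h.symm)⟩
      · exact Or.inr (Or.inl ⟨i, Or.inr ⟨rfl, Or.inl (by rw [hm2] at h; simpa using h.symm)⟩⟩)
      · exact Or.inl ⟨i, Or.inr rfl, Or.inl (by rw [hm1] at h; simpa using h.symm)⟩
      · exact Or.inr (Or.inl ⟨i, Or.inr ⟨rfl, Or.inr (by rw [hm2] at h; simpa using h.symm)⟩⟩)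
  · rw [cpref_x_gen] at hmem'
    rcases (by simpa using hmem' : hp' = (hX B j s, Hos.t j (thi s)) ∨
        hp' = (Hos.t j (tlo s), Hos.t j (tlo (prev3 s)))) with rfl | rfl <;>
      rcases hc1 with rfl | rfl
    · exact Or.inr (Or.inr (Or.inl ⟨j, s, rfl, Or.inl (by rw [hm1] at h; simpa using h.symm)⟩))
    · exact Or.inr (Or.inr (Or.inr ⟨j, s, rfl, Or.inl (by rw [hm2] at h; simpa using h.symm)⟩))
    · exact Or.inr (Or.inr (Or.inl ⟨j, s, rfl, Or.inr (by rw [hm1] at h; simpa using h.symm)⟩))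
    · exact Or.inr (Or.inr (Or.inr ⟨j, s, rfl, Or.inr (by rw [hm2] at h; simpa using h.symm)⟩))

theorem hX_ne_h01 (j : Fin m) (s : Fin 3) (i : Fin n) (k : Fin 6) (hk : k.val < 2) :
    hX B j s ≠ Hos.h i k := by
  rw [hX_def]
  intro h
  rw [Hos.h.injEq] at h
  have h2 := hXk_ge_two B j s
  rw [h.2] at h2
  omega

theorem occ_h01 (hM : (instI B).IsMatching M) {r0 : Res n m} {i : Fin n} {k : Fin 6}
    (hk : k.val < 2) (h : M r0 = some (Hos.h i k)) : r0 = Res.a i 0 ∨ r0 = Res.a i 1 := by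
  rcases matched_shape hM h with ⟨i', hr, hh⟩ | ⟨i', hbs⟩ | ⟨j, s, hr, hh⟩ | ⟨j, s, hr, hh⟩
  · have hi : i' = i := by rcases hh with hh | hh <;> exact ((Hos.h.injEq _ _ _ _).mp hh.symm).1
    rw [hi] at hr; exact hr
  · exfalso
    rcases hbs with ⟨_, hh | hh⟩ | ⟨_, hh | hh⟩ <;>
      · rw [Hos.h.injEq] at hh; have := congrArg Fin.val hh.2; simp at this; omega
  · exfalso
    rcases hh with hh | hh
    · exact hX_ne_h01 j s i k hk hh.symm
    · simp at hh
  · exfalso; rcases hh with hh | hh <;> simp at hh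

theorem occ_b_or_x (hM : (instI B).IsMatching M) {r0 : Res n m} {i : Fin n} {k : Fin 6}
    (hk : 2 ≤ k.val) (h : M r0 = some (Hos.h i k)) :
    (∃ r : Fin 2, r0 = Res.b i r) ∨ ∃ j s, r0 = Res.x j s ∧ Hos.h i k = hX B j s := by
  rcases matched_shape hM h with ⟨i', hr, hh⟩ | ⟨i', hbs⟩ | ⟨j, s, hr, hh⟩ | ⟨j, s, hr, hh⟩
  · exfalso
    rcases hh with hh | hh <;>
      · rw [Hos.h.injEq] at hh; have := congrArg Fin.val hh.2; simp at this; omega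
  · left
    rcases hbs with ⟨hr, hh | hh⟩ | ⟨hr, hh | hh⟩ <;>
      rw [Hos.h.injEq] at hh <;> rw [← hh.1] at hr <;> exact ⟨_, hr⟩
  · rcases hh with hh | hh
    · exact Or.inr ⟨j, s, hr, hh⟩
    · simp at hh
  · exfalso; rcases hh with hh | hh <;> simp at hh

theorem occ_tlo (hM : (instI B).IsMatching M) {r0 : Res n m} {j : Fin m} {s : Fin 3}
    (h : M r0 = some (Hos.t j (tlo s))) : r0 = Res.x j s ∨ r0 = Res.y j (nxt3 s) := by
  rcases matched_shape hM h with ⟨i', _, hh⟩ | ⟨i', hbs⟩ | ⟨j', s', hr, hh⟩ | ⟨j', s', hr, hh⟩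
  · exfalso; rcases hh with hh | hh <;> simp at hh
  · exfalso; rcases hbs with ⟨_, hh | hh⟩ | ⟨_, hh | hh⟩ <;> simp at hh
  · rcases hh with hh | hh
    · exfalso; rw [hX_def] at hh; simp at hh
    · rw [Hos.t.injEq] at hh
      obtain ⟨rfl, hk⟩ := hh
      rw [← tlo_inj hk] at hr
      exact Or.inl hr
  · rcases hh with hh | hh
    · exact absurd hh (by rw [Hos.t.injEq]; rintro ⟨rfl, hk⟩; exact tlo_ne_thi _ _ hk)
    · rw [Hos.t.injEq] at hh
      obtain ⟨rfl, hk⟩ := hh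
      have : s' = nxt3 s := by rw [tlo_inj hk]; exact (nxt3_prev3 s').symm
      rw [this] at hr
      exact Or.inr hr

end LocalAux

section LocalAux
open HRC1 E3SAT
variable {n m : ℕ} {B : E3SAT n m} {M : Res n m → Option (Hos n m)}

theorem x_occ_eq {j : Fin m} {s : Fin 3} {i : Fin n} {k : Fin 6}
    (hh : Hos.h i k = hX B j s) : Res.x j s = xOfH B i k := by
  rw [hX_def, Hos.h.injEq] at hh
  rw [hh.1, hh.2, xOfH_hXk]

theorem a_at (hM : (instI B).IsMatching M) {i : Fin n} {r : Fin 2} {hh : Hos n m}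
    (h : M (Res.a i r) = some hh) : hh = Hos.h i 0 ∨ hh = Hos.h i 1 := by
  rcases matched_shape hM h with ⟨i', hr, hh'⟩ | ⟨i', ⟨hr, _⟩ | ⟨hr, _⟩⟩ |
      ⟨j, s, hr, _⟩ | ⟨j, s, hr, _⟩ <;>
    first
      | (rcases hr with hr | hr <;> rw [Res.a.injEq] at hr <;> rw [← hr.1] at hh' <;> exact hh')
      | simp at hr

theorem b_at (hM : (instI B).IsMatching M) {i : Fin n} {r : Fin 2} {hh : Hos n m}
    (h : M (Res.b i r) = some hh) :
    (r = 0 ∧ (hh = Hos.h i 2 ∨ hh = Hos.h i 3)) ∨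
    (r = 1 ∧ (hh = Hos.h i 4 ∨ hh = Hos.h i 5)) := by
  rcases matched_shape hM h with ⟨i', hr | hr, _⟩ | ⟨i', ⟨hr, hh'⟩ | ⟨hr, hh'⟩⟩ |
      ⟨j, s, hr, _⟩ | ⟨j, s, hr, _⟩ <;>
    first
      | (rw [Res.b.injEq] at hr; rw [← hr.1] at hh'; exact Or.inl ⟨hr.2, hh'⟩)
      | (rw [Res.b.injEq] at hr; rw [← hr.1] at hh'; exact Or.inr ⟨hr.2, hh'⟩)
      | simp at hr

theorem x_at (hM : (instI B).IsMatching M) {j : Fin m} {s : Fin 3} {hh : Hos n m}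
    (h : M (Res.x j s) = some hh) : hh = hX B j s ∨ hh = Hos.t j (tlo s) := by
  rcases matched_shape hM h with ⟨i', hr | hr, _⟩ | ⟨i', ⟨hr, _⟩ | ⟨hr, _⟩⟩ |
      ⟨j', s', hr, hh'⟩ | ⟨j', s', hr, _⟩ <;>
    first
      | (rw [Res.x.injEq] at hr; rw [← hr.1, ← hr.2] at hh'; exact hh')
      | simp at hr

theorem y_at (hM : (instI B).IsMatching M) {j : Fin m} {s : Fin 3} {hh : Hos n m}
    (h : M (Res.y j s) = some hh) :
    hh = Hos.t j (thi s) ∨ hh = Hos.t j (tlo (prev3 s)) := by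
  rcases matched_shape hM h with ⟨i', hr | hr, _⟩ | ⟨i', ⟨hr, _⟩ | ⟨hr, _⟩⟩ |
      ⟨j', s', hr, _⟩ | ⟨j', s', hr, hh'⟩ <;>
    first
      | (rw [Res.y.injEq] at hr; rw [← hr.1, ← hr.2] at hh'; exact hh')
      | simp at hr

theorem open_bx (hM : (instI B).IsMatching M) {i : Fin n} {k : Fin 6} (hk : 2 ≤ k.val)
    {r₀ : Fin 2} (hlist : (instI B).hospPref (Hos.h i k) = [Res.b i r₀, xOfH B i k])
    (hnb : ∀ r : Fin 2, M (Res.b i r) ≠ some (Hos.h i k)) :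
    (instI B).HospOpenFor M (Hos.h i k) (Res.b i r₀) := by
  by_cases hex : ∃ r', M r' = some (Hos.h i k)
  · obtain ⟨r', hr'⟩ := hex
    rcases occ_b_or_x hM hk hr' with ⟨r, rfl⟩ | ⟨j, s, rfl, hh⟩
    · exact absurd hr' (hnb r)
    · refine Or.inr ⟨Res.x j s, hr', ?_⟩
      rw [hlist, x_occ_eq hh]
      exact prefers_pair (by simp [xOfH])
  · exact Or.inl fun r hr => hex ⟨r, hr⟩

theorem open_a (hM : (instI B).IsMatching M) {i : Fin n} {k : Fin 6} (hk : k.val < 2)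
    {r₀ r₁ : Fin 2} (hne : r₀ ≠ r₁)
    (hlist : (instI B).hospPref (Hos.h i k) = [Res.a i r₀, Res.a i r₁])
    (hna : M (Res.a i r₀) ≠ some (Hos.h i k)) :
    (instI B).HospOpenFor M (Hos.h i k) (Res.a i r₀) := by
  by_cases hex : ∃ r', M r' = some (Hos.h i k)
  · obtain ⟨r', hr'⟩ := hex
    rcases occ_h01 hM hk hr' with rfl | rfl <;>
      rcases fin2_cases r₀ with rfl | rfl <;>
      rcases fin2_cases r₁ with rfl | rfl <;>
      first
        | exact absurd hr' hna
        | exact absurd rfl hne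
        | exact Or.inr ⟨_, hr', by rw [hlist]; exact prefers_pair (by simp)⟩
  · exact Or.inl fun r hr => hex ⟨r, hr⟩

theorem var_consistent (hSt : (instI B).Stable M) (i : Fin n) :
    (M (Res.a i 0) = some (Hos.h i 0) ∧ M (Res.b i 0) = some (Hos.h i 2) ∧
     M (Res.a i 1) = some (Hos.h i 1) ∧ M (Res.b i 1) = some (Hos.h i 4)) ∨
    (M (Res.a i 0) = some (Hos.h i 1) ∧ M (Res.b i 0) = some (Hos.h i 3) ∧
     M (Res.a i 1) = some (Hos.h i 0) ∧ M (Res.b i 1) = some (Hos.h i 5)) := by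
  obtain ⟨hM, _, hBC⟩ := hSt
  have hinj := hM.1
  have hcpl := hM.2.2.1
  rcases hcpl _ (mem_couples_ab B i 0) with ⟨hn1, hn1'⟩ | ⟨hp1, hm1, ha1, hb1⟩
  · exfalso
    have hna : M (Res.a i 0) = none := hn1
    have hnb : M (Res.b i 0) = none := hn1'
    apply hBC (Res.a i 0, Res.b i 0) (Hos.h i 1, Hos.h i 3)
    refine ⟨mem_couples_ab B i 0, by rw [(cpref_a B i).1]; simp,
      Or.inl ⟨hna, hnb⟩, Or.inr ?_, Or.inr ?_⟩
    · exact open_a hM (by decide) (by decide) ((hpref_h B i).2.1) (by rw [hna]; simp)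
    · refine open_bx hM (by decide) ((hpref_h B i).2.2.2.1) ?_
      intro r hcon
      rcases b_at hM hcon with ⟨rfl, _⟩ | ⟨_, hc⟩
      · rw [hnb] at hcon; exact absurd hcon (by simp)
      · rcases hc with hc | hc <;> simp at hc
  rcases hcpl _ (mem_couples_ab B i 1) with ⟨hn2, hn2'⟩ | ⟨hp2, hm2, ha2, hb2⟩
  · exfalso
    have hna : M (Res.a i 1) = none := hn2
    have hnb : M (Res.b i 1) = none := hn2'
    apply hBC (Res.a i 1, Res.b i 1) (Hos.h i 0, Hos.h i 5)
    refine ⟨mem_couples_ab B i 1, by rw [(cpref_a B i).2]; simp,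
      Or.inl ⟨hna, hnb⟩, Or.inr ?_, Or.inr ?_⟩
    · exact open_a hM (by decide) (by decide) ((hpref_h B i).1) (by rw [hna]; simp)
    · refine open_bx hM (by decide) ((hpref_h B i).2.2.2.2.2) ?_
      intro r hcon
      rcases b_at hM hcon with ⟨_, hc⟩ | ⟨rfl, _⟩
      · rcases hc with hc | hc <;> simp at hc
      · rw [hnb] at hcon; exact absurd hcon (by simp)
  rw [(cpref_a B i).1] at hm1
  rw [(cpref_a B i).2] at hm2
  have ha1' : M (Res.a i 0) = some hp1.1 := ha1
  have hb1' : M (Res.b i 0) = some hp1.2 := hb1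
  have ha2' : M (Res.a i 1) = some hp2.1 := ha2
  have hb2' : M (Res.b i 1) = some hp2.2 := hb2
  rcases (by simpa using hm1 : hp1 = (Hos.h i 0, Hos.h i 2) ∨
      hp1 = (Hos.h i 1, Hos.h i 3)) with rfl | rfl <;>
    rcases (by simpa using hm2 : hp2 = (Hos.h i 1, Hos.h i 4) ∨
        hp2 = (Hos.h i 0, Hos.h i 5)) with rfl | rfl
  · exact Or.inl ⟨ha1', hb1', ha2', hb2'⟩
  · exact absurd (hinj _ _ _ ha1' ha2') (by simp)
  · exact absurd (hinj _ _ _ ha1' ha2') (by simp)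
  · exact Or.inr ⟨ha1', hb1', ha2', hb2'⟩

end LocalAux

section LocalAux
open HRC1 E3SAT
variable {n m : ℕ} {B : E3SAT n m} {M : Res n m → Option (Hos n m)}

theorem nxt3_nxt3 (s : Fin 3) : nxt3 (nxt3 s) = prev3 s := by
  rcases fin3_cases s with rfl | rfl | rfl <;> decide

theorem clause_matched (hSt : (instI B).Stable M) (j : Fin m) :
    ∃ s, M (Res.x j s) = some (hX B j s) := by
  obtain ⟨hM, _, hBC⟩ := hSt
  have hinj := hM.1
  have hcpl := hM.2.2.1
  by_contra hcon
  push_neg at hcon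
  have hstat : ∀ s : Fin 3, (M (Res.x j s) = none ∧ M (Res.y j s) = none) ∨
      (M (Res.x j s) = some (Hos.t j (tlo s)) ∧
       M (Res.y j s) = some (Hos.t j (tlo (prev3 s)))) := by
    intro s
    rcases hcpl _ (mem_couples_xy B j s) with ⟨h1, h2⟩ | ⟨hp', hm', h1, h2⟩
    · exact Or.inl ⟨h1, h2⟩
    · rw [cpref_x_gen] at hm'
      have h1' : M (Res.x j s) = some hp'.1 := h1
      have h2' : M (Res.y j s) = some hp'.2 := h2
      rcases (by simpa using hm' : hp' = (hX B j s, Hos.t j (thi s)) ∨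
          hp' = (Hos.t j (tlo s), Hos.t j (tlo (prev3 s)))) with rfl | rfl
      · exact absurd h1' (hcon s)
      · exact Or.inr ⟨h1', h2'⟩
  have hfree : ∀ s : Fin 3, M (Res.x j s) = none → M (Res.y j (nxt3 s)) = none →
      HospFree M (Hos.t j (tlo s)) := by
    intro s hxn hyn r hr
    rcases occ_tlo hM hr with rfl | rfl
    · rw [hxn] at hr; exact absurd hr (by simp)
    · rw [hyn] at hr; exact absurd hr (by simp)
  by_cases hex : ∃ s0, M (Res.x j s0) = some (Hos.t j (tlo s0))
  · obtain ⟨s0, hs0⟩ := hex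
    have hy0 : M (Res.y j s0) = some (Hos.t j (tlo (prev3 s0))) := by
      rcases hstat s0 with ⟨h1, _⟩ | ⟨_, h2⟩
      · rw [h1] at hs0; exact absurd hs0 (by simp)
      · exact h2
    have hnxt : M (Res.x j (nxt3 s0)) = none ∧ M (Res.y j (nxt3 s0)) = none := by
      rcases hstat (nxt3 s0) with h | ⟨hx', hy'⟩
      · exact h
      · exfalso
        rw [prev3_nxt3] at hy'
        have := hinj _ _ _ hs0 hy'
        simp at this
    have hprv : M (Res.x j (prev3 s0)) = none ∧ M (Res.y j (prev3 s0)) = none := by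
      rcases hstat (prev3 s0) with h | ⟨hx', hy'⟩
      · exact h
      · exfalso
        have := hinj _ _ _ hx' hy0
        simp at this
    apply hBC (Res.x j (prev3 s0), Res.y j (prev3 s0))
      (Hos.t j (tlo (prev3 s0)), Hos.t j (tlo (prev3 (prev3 s0))))
    refine ⟨mem_couples_xy B j (prev3 s0), by rw [cpref_x_gen]; simp,
      Or.inl ⟨hprv.1, hprv.2⟩, Or.inr (Or.inr ⟨Res.y j s0, hy0, ?_⟩), Or.inr (Or.inl ?_)⟩
    · rw [hpref_tlo B j (prev3 s0), nxt3_prev3]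
      exact prefers_pair (by simp)
    · rw [prev3_prev3]
      exact hfree (nxt3 s0) hnxt.1 (by rw [nxt3_nxt3]; exact hprv.2)
  · push_neg at hex
    have hall : ∀ s, M (Res.x j s) = none ∧ M (Res.y j s) = none := by
      intro s
      rcases hstat s with h | ⟨hx', _⟩
      · exact h
      · exact absurd hx' (hex s)
    apply hBC (Res.x j 0, Res.y j 0) (Hos.t j (tlo 0), Hos.t j (tlo (prev3 0)))
    refine ⟨mem_couples_xy B j 0, by rw [cpref_x_gen]; simp,
      Or.inl ⟨(hall 0).1, (hall 0).2⟩, Or.inr (Or.inl ?_), Or.inr (Or.inl ?_)⟩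
    · exact hfree 0 (hall 0).1 (hall _).2
    · exact hfree (prev3 0) (hall _).1 (hall _).2

theorem reverse_dir (hSt : (instI B).Stable M) : B.Satisfiable := by
  refine ⟨fun i => decide (M (Res.a i 0) = some (Hos.h i 1)), fun j => ?_⟩
  obtain ⟨s, hxs⟩ := clause_matched hSt j
  refine ⟨s, ?_⟩
  have hinj := hSt.1.1
  show decide (M (Res.a (B.clause j s).1 0) = some (Hos.h (B.clause j s).1 1)) =
    (B.clause j s).2
  rw [hX_def] at hxs
  rcases var_consistent hSt (B.clause j s).1 with ⟨ha0, hb0, _, hb4⟩ | ⟨ha0, hb0, _, hb4⟩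
  · have hf : decide (M (Res.a (B.clause j s).1 0) =
        some (Hos.h (B.clause j s).1 1)) = false := by simp [ha0]
    rw [hf]
    rcases hp : (B.clause j s).2 with _ | _
    · rfl
    · exfalso
      rcases hXk_spec B j s with ⟨hp', hr, hk⟩ | ⟨hp', hr, hk⟩ |
          ⟨hp', hr, hk⟩ | ⟨hp', hr, hk⟩ <;> rw [hp] at hp'
      · rw [hk] at hxs; exact absurd (hinj _ _ _ hxs hb0) (by simp)
      · rw [hk] at hxs; exact absurd (hinj _ _ _ hxs hb4) (by simp)
      · exact absurd hp' (by simp)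
      · exact absurd hp' (by simp)
  · have hf : decide (M (Res.a (B.clause j s).1 0) =
        some (Hos.h (B.clause j s).1 1)) = true := by simp [ha0]
    rw [hf]
    rcases hp : (B.clause j s).2 with _ | _
    · exfalso
      rcases hXk_spec B j s with ⟨hp', hr, hk⟩ | ⟨hp', hr, hk⟩ |
          ⟨hp', hr, hk⟩ | ⟨hp', hr, hk⟩ <;> rw [hp] at hp'
      · exact absurd hp' (by simp)
      · exact absurd hp' (by simp)
      · rw [hk] at hxs; exact absurd (hinj _ _ _ hxs hb0) (by simp)
      · rw [hk] at hxs; exact absurd (hinj _ _ _ hxs hb4) (by simp)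
    · rfl

theorem main_thm (B : E3SAT n m) :
    B.Satisfiable ↔ ∃ M : Res n m → Option (Hos n m), (instI B).Stable M := by
  constructor
  · rintro ⟨f, hf⟩
    exact ⟨mkM B f, mkM_stable B f fun j => by
      obtain ⟨s, hs⟩ := hf j
      exact ⟨s, by simp [litb, hs]⟩⟩
  · rintro ⟨M, hSt⟩
    exact reverse_dir hSt

end LocalAux

/-- `B` is satisfiable if and only if `I(B)` admits a stable matching. -/
theorem satisfiable_iff_instI_admits_stable {n m : ℕ} (B : E3SAT n m) :
    B.Satisfiable ↔ ∃ M : Res n m → Option (Hos n m), (instI B).Stable M := by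
  exact main_thm B
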